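/- In the weighted STV construction (W-votes p ≻ a ≻ b summing to 4K, vote a ≻ p ≻ b of weight 3K−1, vote b ≻ a ≻ p of weight 2K, tie-breaking a ≻ b ≻ p), if the changed W-votes placing b first have total weight strictly greater than K, then p is eliminated in the first round and cannot win. -/

import Mathlib

/-- The three candidates. -/
inductive Cand : Type
  | p | a | b
deriving DecidableEq

open Cand

/-- Weighted plurality score: total weight of the votes ranking `x` first. -/
def plScore (E : Multiset (ℕ × List Cand)) (x : Cand) : ℕ :=
  (E.map fun v => if v.2.head? = some x then v.1 else 0).sum

/-- Weighted pairwise margin `D(x,y)`. -/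
def marg (E : Multiset (ℕ × List Cand)) (x y : Cand) : ℤ :=
  (E.map fun v => if v.2.idxOf x < v.2.idxOf y then (v.1 : ℤ) else -(v.1 : ℤ)).sum

/-- Tie-breaking order `a ≻ b ≻ p`. -/
def prioABP : Cand → ℕ
  | Cand.a => 0
  | Cand.b => 1
  | Cand.p => 2

/-- `e` is eliminated in the first STV round: `e` has the lowest plurality score,
ties broken by the tie-breaking order (the less preferred candidate is eliminated). -/
def eliminatedFirst (E : Multiset (ℕ × List Cand)) (prio : Cand → ℕ) (e : Cand) : Prop :=
  ∀ y, y ≠ e → plScore E e < plScore E y ∨ (plScore E e = plScore E y ∧ prio y < prio e)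

/-- `x` beats `y` in the weighted pairwise contest, ties broken by the tie-breaking order. -/
def pairBeats (E : Multiset (ℕ × List Cand)) (prio : Cand → ℕ) (x y : Cand) : Prop :=
  0 < marg E x y ∨ (marg E x y = 0 ∧ prio x < prio y)

/-- STV winner for three candidates: some candidate `e` is eliminated first, and `x`
wins the pairwise contest against the other remaining candidate (vote transfers preserve
the pairwise comparison between the two remaining candidates). -/
def stvWins (E : Multiset (ℕ × List Cand)) (prio : Cand → ℕ) (x : Cand) : Prop :=
  ∃ e, eliminatedFirst E prio e ∧ x ≠ e ∧ ∀ y, y ≠ e → y ≠ x → pairBeats E prio x y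


lemma plScore_add (E F : Multiset (ℕ × List Cand)) (x : Cand) :
    plScore (E + F) x = plScore E x + plScore F x := by
  simp [plScore]

lemma not_stvWins_of_elim (E : Multiset (ℕ × List Cand)) (prio : Cand → ℕ)
    (hp : eliminatedFirst E prio p) : ¬ stvWins E prio p := by
  rintro ⟨e, he, hne, -⟩
  rcases he p hne with h | ⟨h1, h2⟩ <;> rcases hp e (Ne.symm hne) with h' | ⟨h1', h2'⟩ <;> omega

lemma key_scores (V : Multiset (ℕ × List Cand))
    (hrank : ∀ v ∈ V, v.2.Perm [p, a, b] ∧ v.2.idxOf p < v.2.idxOf a) :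
    plScore V a = 0 ∧ plScore V p + plScore V b = (V.map Prod.fst).sum ∧
      plScore V b = ((V.filter fun v => v.2.head? = some b).map Prod.fst).sum := by
  induction V using Multiset.induction with
  | empty => simp [plScore]
  | cons v V ih =>
    obtain ⟨hperm, hidx⟩ := hrank v (Multiset.mem_cons_self _ _)
    obtain ⟨K0, K1, K2⟩ := ih fun u hu => hrank u (Multiset.mem_cons_of_mem hu)
    have hlen := hperm.length_eq
    obtain ⟨x, l, hx⟩ : ∃ x l, v.2 = x :: l := by
      rcases h : v.2 with _ | ⟨y, ys⟩
      · rw [h] at hlen; simp at hlen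
      · exact ⟨y, ys, rfl⟩
    have hxmem : x ∈ ([p, a, b] : List Cand) := hperm.mem_iff.mp (by simp [hx])
    have hxa : x ≠ a := by
      intro h
      rw [hx, h] at hidx
      simp [List.idxOf_cons_self] at hidx
    have hx' : x = p ∨ x = b := by
      simp only [List.mem_cons, List.mem_singleton, List.not_mem_nil, or_false] at hxmem
      rcases hxmem with h | h | h
      · exact Or.inl h
      · exact absurd h hxa
      · exact Or.inr h
    have hcons : ∀ z : Cand, plScore (v ::ₘ V) z =
        (if v.2.head? = some z then v.1 else 0) + plScore V z := by
      intro z; simp [plScore]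
    rcases hx' with h | h <;> subst h <;>
      refine ⟨?_, ?_, ?_⟩ <;>
      simp [hcons, hx, Multiset.filter_cons, K0, K1, K2] <;> omega

/-- In the weighted STV construction, if the changed `W`-votes placing `b` first have
total weight strictly greater than `K`, then `p` is eliminated in the first round and
cannot win. -/
theorem stmt_8 (K : ℕ) (hK : 0 < K) (W : Multiset ℕ)
    (hpos : ∀ w ∈ W, 0 < w) (hsum : W.sum = 4 * K)
    (V : Multiset (ℕ × List Cand)) (hV : V.map Prod.fst = W)
    (hrank : ∀ v ∈ V, v.2.Perm [p, a, b] ∧ v.2.idxOf p < v.2.idxOf a)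
    (ht : K < ((V.filter fun v => v.2.head? = some b).map Prod.fst).sum) :
    eliminatedFirst (V + {(3 * K - 1, [a, p, b]), (2 * K, [b, a, p])}) prioABP p ∧
      ¬ stvWins (V + {(3 * K - 1, [a, p, b]), (2 * K, [b, a, p])}) prioABP p := by
  have hsum' : (V.map Prod.fst).sum = 4 * K := by rw [hV]; exact hsum
  obtain ⟨ha0, hpb, hbt⟩ := key_scores V hrank
  rw [← hbt] at ht
  set E := V + ({(3 * K - 1, [a, p, b]), (2 * K, [b, a, p])} : Multiset (ℕ × List Cand)) with hE
  have hEp : plScore E p = plScore V p := by simp [hE, plScore_add, plScore]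
  have hEa : plScore E a = plScore V a + (3 * K - 1) := by rw [hE, plScore_add]; simp [plScore]
  have hEb : plScore E b = plScore V b + 2 * K := by rw [hE, plScore_add]; simp [plScore]
  have helim : eliminatedFirst E prioABP p := by
    intro y hy
    cases y with
    | p => exact absurd rfl hy
    | a => rw [hEp, hEa, ha0]; simp only [prioABP]; omega
    | b => rw [hEp, hEb]; left; omega
  exact ⟨helim, not_stvWins_of_elim _ _ helim⟩
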